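/- The D-series nimrep for SU(2): for κ = k+2 even, the quotient module R_{O(2)} / span_Z{κ_{κ/2}, κ_{j+κ/2} + κ_{-j+κ/2} : j ≥ 1} is a free Z-module with basis [δ], [κ_0], [κ_1], …, [κ_{k/2}], and the action of σ ∈ R_{SU(2)} (restricting to κ_1 ∈ R_{O(2)}) on this basis has multiplication graph the Dynkin diagram D_{k/2+2}; moreover this R_{SU(2)}-module structure factors through the fusion ideal (σ_{k+2}), making it a module over Ver_k(SU(2)). -/

import Mathlib

/-!
STATEMENT 15: the D-series nimrep for SU(2).  For `κ = k+2` even (write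
`κ = 2c`), the quotient of `R_{O(2)} = ℤ[δ,κ]/(δκ-κ, δ²-1)` by the `ℤ`-span of
`κ_{κ/2}` and `κ_{j+κ/2} + κ_{-j+κ/2}` (`j ≥ 1`) is free with basis
`[δ], [κ_0], …, [κ_{k/2}]`; multiplication by `κ_1` (the restriction of `σ`)
realizes the Dynkin diagram `D_{k/2+2}`, and the resulting
`R_{SU(2)}`-module structure factors through the fusion ideal `(σ_{k+2})`.
-/

open scoped BigOperators
open Polynomial

noncomputable section

/-- The characters `σ_m` of SU(2). -/
def sigmaP : ℕ → Polynomial ℤ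
  | 0 => 0
  | 1 => 1
  | m + 2 => Polynomial.X * sigmaP (m + 1) - sigmaP m

/-- The representation ring `R_{O(2)} = ℤ[δ,κ]/(δκ = κ, δ² = 1)`; the variable
`X 0` is `δ` and `X 1` is `κ = κ_1`. -/
abbrev RO2 : Type :=
  MvPolynomial (Fin 2) ℤ ⧸
    Ideal.span {MvPolynomial.X 0 * MvPolynomial.X 1 - MvPolynomial.X 1,
                (MvPolynomial.X 0 : MvPolynomial (Fin 2) ℤ) ^ 2 - 1}

/-- The class of `δ = det` in `R_{O(2)}`. -/
def dO : RO2 := Ideal.Quotient.mk _ (MvPolynomial.X 0)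

/-- The two-dimensional representations `κ_i` of `O(2)` (with the conventions
`κ_0 = 1 + δ`, `κ_1 = κ`, and `κ_1 κ_i = κ_{i+1} + κ_{i-1}`). -/
def kap : ℕ → RO2
  | 0 => 1 + dO
  | 1 => Ideal.Quotient.mk _ (MvPolynomial.X 1)
  | i + 2 => Ideal.Quotient.mk _ (MvPolynomial.X 1) * kap (i + 1) - kap i

/-- `κ_m` for `m ∈ ℤ`, with the convention `κ_{-m} = κ_m`. -/
def kapZ (m : ℤ) : RO2 := kap m.natAbs

/-- The `ℤ`-span `span{κ_{κ/2}, κ_{j+κ/2} + κ_{-j+κ/2} : j ≥ 1}` (`c = κ/2`). -/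
def WO2 (c : ℕ) : Submodule ℤ RO2 :=
  Submodule.span ℤ
    ({kap c} ∪ {x | ∃ j : ℕ, 1 ≤ j ∧ x = kap (c + j) + kapZ ((c : ℤ) - j)})

-- basic relations
lemma rel1 : dO * kap 1 = kap 1 := by
  have : (Ideal.Quotient.mk _ (MvPolynomial.X 0 * MvPolynomial.X 1 - MvPolynomial.X 1 :
      MvPolynomial (Fin 2) ℤ)) = (0 : RO2) := by
    rw [Ideal.Quotient.eq_zero_iff_mem]
    exact Ideal.subset_span (by simp)
  have h := this
  rw [map_sub, map_mul, sub_eq_zero] at h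
  exact h

lemma rel2 : dO * dO = 1 := by
  have : (Ideal.Quotient.mk _ ((MvPolynomial.X 0)^2 - 1 :
      MvPolynomial (Fin 2) ℤ)) = (0 : RO2) := by
    rw [Ideal.Quotient.eq_zero_iff_mem]
    exact Ideal.subset_span (by simp)
  rw [map_sub, map_pow, map_one, sub_eq_zero] at this
  rw [show dO * dO = dO ^ 2 from (sq dO).symm]
  exact this

lemma kap_one : kap 1 = Ideal.Quotient.mk _ (MvPolynomial.X 1) := rfl
lemma kap_zero : kap 0 = 1 + dO := rfl
lemma kap_rec (n : ℕ) : kap (n + 2) = kap 1 * kap (n + 1) - kap n := rfl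

lemma K_kap_succ (n : ℕ) : kap 1 * kap (n + 1) = kap (n + 2) + kap n := by
  rw [kap_rec]; ring

lemma K_kap_zero : kap 1 * kap 0 = kap 1 + kap 1 := by
  rw [kap_zero, mul_add, mul_one, mul_comm (kap 1) dO, rel1]

lemma d_kap (n : ℕ) : dO * kap n = kap n := by
  induction n using Nat.twoStepInduction with
  | zero => rw [kap_zero, mul_add, mul_one, rel2]; ring
  | one => exact rel1
  | more n ih1 ih2 =>
    rw [kap_rec, mul_sub, ih1, show dO * (kap 1 * kap (n+1)) = kap 1 * (dO * kap (n+1)) by ring, ih2]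

lemma kapZ_natCast (n : ℕ) : kapZ (n : ℤ) = kap n := by simp [kapZ]
lemma kapZ_neg (m : ℤ) : kapZ (-m) = kapZ m := by simp [kapZ]

lemma K_kapZ (m : ℤ) : kap 1 * kapZ m = kapZ (m + 1) + kapZ (m - 1) := by
  have key : ∀ n : ℕ, kap 1 * kapZ (n : ℤ) = kapZ ((n : ℤ) + 1) + kapZ ((n : ℤ) - 1) := by
    intro n
    match n with
    | 0 =>
      norm_num [kapZ]
      exact K_kap_zero
    | (n+1) =>
      push_cast
      rw [show ((n:ℤ)+1) + 1 = ((n+2 : ℕ) : ℤ) by push_cast [];ring,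
        show ((n:ℤ)+1) - 1 = ((n : ℕ) : ℤ) by push_cast; ring]
      rw [show ((n:ℤ)+1) = ((n+1 : ℕ) : ℤ) by push_cast; ring]
      rw [kapZ_natCast, kapZ_natCast, kapZ_natCast, K_kap_succ]
  rcases Int.eq_nat_or_neg m with ⟨n, rfl | rfl⟩
  · exact key n
  · rw [kapZ_neg, key n, show -(n:ℤ) + 1 = -((n:ℤ) - 1) by ring, show -(n:ℤ) - 1 = -((n:ℤ)+1) by ring,
      kapZ_neg, kapZ_neg, add_comm]

section Wlemmas
variable (c : ℕ)

def G (j : ℕ) : RO2 := kap (c + j) + kapZ ((c : ℤ) - j)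

lemma kapc_mem : kap c ∈ WO2 c :=
  Submodule.subset_span (Or.inl rfl)

lemma G_mem (j : ℕ) : G c j ∈ WO2 c := by
  rcases Nat.eq_zero_or_pos j with rfl | hj
  · have : G c 0 = kap c + kap c := by
      simp [G, kapZ_natCast]
    rw [this]
    exact Submodule.add_mem _ (kapc_mem _) (kapc_mem _)
  · exact Submodule.subset_span (Or.inr ⟨j, hj, rfl⟩)

lemma G_eq (j : ℕ) : G c j = kapZ ((c : ℤ) + j) + kapZ ((c : ℤ) - j) := by
  rw [G, show ((c:ℤ) + j) = ((c + j : ℕ) : ℤ) by push_cast; ring, kapZ_natCast]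

lemma K_G (j : ℕ) (hj : 1 ≤ j) : kap 1 * G c j = G c (j + 1) + G c (j - 1) := by
  rw [G_eq, G_eq, G_eq, mul_add, K_kapZ, K_kapZ]
  rw [show ((c:ℤ) + ↑(j+1)) = (c:ℤ) + j + 1 by push_cast; ring]
  rw [show ((c:ℤ) - ↑(j+1)) = (c:ℤ) - j - 1 by push_cast; ring]
  rw [show ((c:ℤ) + ↑(j-1)) = (c:ℤ) + j - 1 by rw [Nat.cast_sub hj]; push_cast; ring]
  rw [show ((c:ℤ) - ↑(j-1)) = (c:ℤ) - j + 1 by rw [Nat.cast_sub hj]; push_cast; ring]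
  ring

lemma d_kapZ (m : ℤ) : dO * kapZ m = kapZ m := d_kap _

lemma WO2_gen_cases {x : RO2} (hx : x ∈ ({kap c} ∪
    {x | ∃ j : ℕ, 1 ≤ j ∧ x = kap (c + j) + kapZ ((c : ℤ) - j)} : Set RO2)) :
    x = kap c ∨ ∃ j : ℕ, 1 ≤ j ∧ x = G c j := by
  rcases hx with h | ⟨j, hj, h⟩
  · exact Or.inl h
  · exact Or.inr ⟨j, hj, h⟩

lemma WO2_K_closed {x : RO2} (hx : x ∈ WO2 c) : kap 1 * x ∈ WO2 c := by
  refine Submodule.span_induction ?_ (by simp) ?_ ?_ hx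
  · intro x hx
    rcases WO2_gen_cases c hx with rfl | ⟨j, hj, rfl⟩
    · have : kap 1 * kap c = G c 1 := by
        rw [G_eq, ← kapZ_natCast c, K_kapZ]
        norm_num
      rw [this]; exact G_mem c 1
    · rw [K_G c j hj]
      exact Submodule.add_mem _ (G_mem c _) (G_mem c _)
  · intro a b _ _ ha hb
    rw [mul_add]; exact Submodule.add_mem _ ha hb
  · intro a x _ hx
    rw [mul_smul_comm]; exact Submodule.smul_mem _ a hx

lemma WO2_d_closed {x : RO2} (hx : x ∈ WO2 c) : dO * x ∈ WO2 c := by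
  refine Submodule.span_induction ?_ (by simp) ?_ ?_ hx
  · intro x hx
    rcases WO2_gen_cases c hx with rfl | ⟨j, hj, rfl⟩
    · rw [d_kap]; exact kapc_mem c
    · rw [G, mul_add, d_kap, d_kapZ]; exact G_mem c j
  · intro a b _ _ ha hb
    rw [mul_add]; exact Submodule.add_mem _ ha hb
  · intro a x _ hx
    rw [mul_smul_comm]; exact Submodule.smul_mem _ a hx

lemma WO2_mul_closed (x : RO2) {w : RO2} (hw : w ∈ WO2 c) : x * w ∈ WO2 c := by
  obtain ⟨p, rfl⟩ := Ideal.Quotient.mk_surjective x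
  induction p using MvPolynomial.induction_on generalizing w with
  | C a =>
    have : (Ideal.Quotient.mk _ (MvPolynomial.C a : MvPolynomial (Fin 2) ℤ)) * w = a • w := by
      rw [show (MvPolynomial.C a : MvPolynomial (Fin 2) ℤ) = ((a : ℤ) : MvPolynomial (Fin 2) ℤ) by
        norm_cast, map_intCast, zsmul_eq_mul]
    rw [this]; exact Submodule.smul_mem _ a hw
  | add p q hp hq =>
    rw [map_add, add_mul]; exact Submodule.add_mem _ (hp hw) (hq hw)
  | mul_X p n hp =>
    rw [map_mul, mul_assoc]
    have hXw : (Ideal.Quotient.mk _ (MvPolynomial.X n) : RO2) * w ∈ WO2 c := by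
      fin_cases n
      · exact WO2_d_closed c hw
      · exact WO2_K_closed c hw
    exact hp hXw
end Wlemmas

section Span
variable (c : ℕ)

def genset : Set RO2 :=
  {kap c} ∪ {x | ∃ j : ℕ, 1 ≤ j ∧ x = kap (c + j) + kapZ ((c : ℤ) - j)}

lemma WO2_eq : WO2 c = Submodule.span ℤ (genset c) := rfl

def bigset : Set RO2 := ({dO} ∪ Set.range kap) ∪ genset c

lemma one_mem_big : (1 : RO2) ∈ Submodule.span ℤ (bigset c) := by
  have : (1 : RO2) = kap 0 - dO := by rw [kap_zero]; ring
  rw [this]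
  exact Submodule.sub_mem _
    (Submodule.subset_span (Or.inl (Or.inr ⟨0, rfl⟩)))
    (Submodule.subset_span (Or.inl (Or.inl rfl)))

lemma WO2_le_big : WO2 c ≤ Submodule.span ℤ (bigset c) := by
  rw [WO2_eq]
  exact Submodule.span_mono (Set.subset_union_right)

lemma big_d_closed {x : RO2} (hx : x ∈ Submodule.span ℤ (bigset c)) :
    dO * x ∈ Submodule.span ℤ (bigset c) := by
  refine Submodule.span_induction ?_ (by simp) ?_ ?_ hx
  · intro y hy
    rcases hy with (rfl | ⟨m, rfl⟩) | hy
    · rw [rel2]; exact one_mem_big c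
    · rw [d_kap]; exact Submodule.subset_span (Or.inl (Or.inr ⟨m, rfl⟩))
    · exact WO2_le_big c (WO2_d_closed c (Submodule.subset_span hy))
  · intro a b _ _ ha hb; rw [mul_add]; exact Submodule.add_mem _ ha hb
  · intro a y _ hy; rw [mul_smul_comm]; exact Submodule.smul_mem _ a hy

lemma big_K_closed {x : RO2} (hx : x ∈ Submodule.span ℤ (bigset c)) :
    kap 1 * x ∈ Submodule.span ℤ (bigset c) := by
  refine Submodule.span_induction ?_ (by simp) ?_ ?_ hx
  · intro y hy
    have hk : ∀ m : ℕ, kap m ∈ Submodule.span ℤ (bigset c) := fun m =>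
      Submodule.subset_span (Or.inl (Or.inr ⟨m, rfl⟩))
    rcases hy with (rfl | ⟨m, rfl⟩) | hy
    · rw [mul_comm (kap 1) dO, rel1]; exact hk 1
    · match m with
      | 0 => rw [K_kap_zero]; exact Submodule.add_mem _ (hk 1) (hk 1)
      | (n+1) => rw [K_kap_succ]; exact Submodule.add_mem _ (hk (n+2)) (hk n)
    · exact WO2_le_big c (WO2_K_closed c (Submodule.subset_span hy))
  · intro a b _ _ ha hb; rw [mul_add]; exact Submodule.add_mem _ ha hb
  · intro a y _ hy; rw [mul_smul_comm]; exact Submodule.smul_mem _ a hy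

lemma big_top : Submodule.span ℤ (bigset c) = ⊤ := by
  rw [eq_top_iff]
  rintro x -
  obtain ⟨p, rfl⟩ := Ideal.Quotient.mk_surjective x
  induction p using MvPolynomial.induction_on with
  | C a =>
    rw [show (MvPolynomial.C a : MvPolynomial (Fin 2) ℤ) = ((a : ℤ) : MvPolynomial (Fin 2) ℤ) by
      norm_cast, map_intCast]
    rw [show ((a : ℤ) : RO2) = a • (1 : RO2) by rw [zsmul_eq_mul, mul_one]]
    exact Submodule.smul_mem _ a (one_mem_big c)
  | add p q hp hq => rw [map_add]; exact Submodule.add_mem _ hp hq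
  | mul_X p n hp =>
    rw [map_mul, mul_comm ((Ideal.Quotient.mk _) p) ((Ideal.Quotient.mk _) (MvPolynomial.X n))]
    fin_cases n
    · exact big_d_closed c hp
    · exact big_K_closed c hp

def Tsub : Submodule ℤ RO2 :=
  Submodule.span ℤ ({dO} ∪ kap '' Set.Iio c) ⊔ WO2 c

lemma kap_mem_T (hc : 1 ≤ c) : ∀ m : ℕ, kap m ∈ Tsub c := by
  intro m
  induction m using Nat.strong_induction_on with
  | _ m ih =>
    rcases lt_trichotomy m c with h | rfl | h
    · exact Submodule.mem_sup_left (Submodule.subset_span (Or.inr ⟨m, h, rfl⟩))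
    · exact Submodule.mem_sup_right (kapc_mem m)
    · set r : ℕ := ((c : ℤ) - ((m - c : ℕ) : ℤ)).natAbs with hr
      have hGm : G c (m - c) = kap m + kap r := by
        rw [G, show c + (m - c) = m by omega, hr, kapZ]
      have hrm : r < m := by
        have h1 : ((m - c : ℕ) : ℤ) = (m : ℤ) - c := by omega
        have h2 : (c : ℤ) < (m : ℤ) := by exact_mod_cast h
        have h3 : (1 : ℤ) ≤ (c : ℤ) := by exact_mod_cast hc
        rw [hr, h1]
        omega
      have : kap m = G c (m - c) - kap r := by rw [hGm]; ring
      rw [this]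
      exact Submodule.sub_mem _ (Submodule.mem_sup_right (G_mem c _)) (ih r hrm)

lemma Tsub_top (hc : 1 ≤ c) : Tsub c = ⊤ := by
  rw [eq_top_iff, ← big_top c]
  rw [Submodule.span_le]
  rintro x ((rfl | ⟨m, rfl⟩) | hx)
  · exact Submodule.mem_sup_left (Submodule.subset_span (Or.inl rfl))
  · exact kap_mem_T c hc m
  · exact Submodule.mem_sup_right (Submodule.subset_span hx)

end Span

section Eval
open LaurentPolynomial

abbrev LP := LaurentPolynomial ℤ

def tgt : Fin 2 → LP × ℤ := ![(1, -1), (T 1 + T (-1), 0)]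

def f0 : MvPolynomial (Fin 2) ℤ →+* LP × ℤ :=
  MvPolynomial.eval₂Hom (Int.castRingHom _) tgt

lemma f0_vanish : ∀ a ∈ Ideal.span ({MvPolynomial.X 0 * MvPolynomial.X 1 - MvPolynomial.X 1,
    (MvPolynomial.X 0 : MvPolynomial (Fin 2) ℤ) ^ 2 - 1} : Set (MvPolynomial (Fin 2) ℤ)),
    f0 a = 0 := by
  intro a ha
  have hle : Ideal.span ({MvPolynomial.X 0 * MvPolynomial.X 1 - MvPolynomial.X 1,
      (MvPolynomial.X 0 : MvPolynomial (Fin 2) ℤ) ^ 2 - 1} : Set (MvPolynomial (Fin 2) ℤ))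
      ≤ RingHom.ker f0 := by
    rw [Ideal.span_le]
    rintro x (rfl | rfl)
    · simp only [RingHom.mem_ker, SetLike.mem_coe, map_sub, map_mul, f0,
        MvPolynomial.eval₂Hom_X', tgt]
      simp [Prod.ext_iff]
    · simp only [RingHom.mem_ker, SetLike.mem_coe, map_sub, map_pow, map_one, f0,
        MvPolynomial.eval₂Hom_X', tgt]
      simp [Prod.ext_iff, sq]
  exact hle ha

def ev : RO2 →+* LP × ℤ := Ideal.Quotient.lift _ f0 f0_vanish

lemma ev_mk (p : MvPolynomial (Fin 2) ℤ) : ev (Ideal.Quotient.mk _ p) = f0 p :=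
  Ideal.Quotient.lift_mk _ _ _

lemma ev_d : ev dO = (1, -1) := by
  rw [dO, ev_mk]; simp [f0, tgt]

lemma ev_K : ev (kap 1) = (T 1 + T (-1), 0) := by
  rw [kap_one, ev_mk]; simp [f0, tgt]

lemma ev_kap (n : ℕ) : ev (kap n) = (T (n : ℤ) + T (-(n : ℤ)), 0) := by
  induction n using Nat.twoStepInduction with
  | zero =>
    rw [kap_zero, map_add, map_one, ev_d]
    simp only [Nat.cast_zero, neg_zero, T_zero]
    norm_num [Prod.ext_iff]
  | one => rw [ev_K]; norm_num
  | more n ih1 ih2 =>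
    rw [kap_rec, map_sub, map_mul, ev_K, ih1, ih2]
    have ta : (T (1:ℤ) * T ((n:ℤ)+1) : LP) = T ((n:ℤ)+2) := by rw [← T_add]; congr 1; ring
    have tb : (T (1:ℤ) * T (-((n:ℤ)+1)) : LP) = T (-(n:ℤ)) := by rw [← T_add]; congr 1; ring
    have tc : (T (-1:ℤ) * T ((n:ℤ)+1) : LP) = T ((n:ℤ)) := by rw [← T_add]; congr 1; ring
    have td : (T (-1:ℤ) * T (-((n:ℤ)+1)) : LP) = T (-((n:ℤ)+2)) := by rw [← T_add]; congr 1; ring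
    have hcast : ((n + 2 : ℕ) : ℤ) = (n : ℤ) + 2 := by push_cast; ring
    have hcast2 : ((n + 1 : ℕ) : ℤ) = (n : ℤ) + 1 := by push_cast; ring
    rw [hcast, hcast2, Prod.ext_iff]
    constructor
    · simp only [Prod.fst_mul, Prod.fst_sub, Prod.fst_add]
      rw [add_mul, mul_add, mul_add, ta, tb, tc, td]
      ring
    · simp

lemma ev_kapZ (m : ℤ) : ev (kapZ m) = (T m + T (-m), 0) := by
  rw [kapZ, ev_kap]
  rcases Int.natAbs_eq m with h | h
  · rw [← h]
  · rw [show ((m.natAbs : ℤ)) = -m by omega]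
    rw [neg_neg, add_comm]

end Eval

section Functionals
open LaurentPolynomial

def lam (W : ℤ → ℤ) : LP →ₗ[ℤ] ℤ := (Finsupp.linearCombination ℤ W).comp (AddMonoidAlgebra.coeffLinearEquiv ℤ).toLinearMap

lemma lam_T (W : ℤ → ℤ) (m : ℤ) : lam W (T m) = W m := by
  show Finsupp.linearCombination ℤ W (Finsupp.single m 1) = W m
  rw [Finsupp.linearCombination_single, one_smul]

def wfn (c i : ℕ) (m : ℤ) : ℤ :=
  (if (4*(c:ℤ)) ∣ (m - i) then 1 else 0) + (if (4*(c:ℤ)) ∣ (m + i) then 1 else 0)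
  - (if (4*(c:ℤ)) ∣ (m - i - 2*c) then 1 else 0) - (if (4*(c:ℤ)) ∣ (m + i - 2*c) then 1 else 0)

lemma hz (c : ℕ) (x : ℤ) (h1 : (4*(c:ℤ)) ∣ x) (h2 : -(4*(c:ℤ)) < x) (h3 : x < 4*(c:ℤ)) :
    x = 0 := by
  refine Int.eq_zero_of_dvd_of_natAbs_lt_natAbs h1 ?_
  omega

lemma wfn_even (c i : ℕ) (m : ℤ) : wfn c i (-m) = wfn c i m := by
  have hsh : ∀ x : ℤ, ((4*(c:ℤ)) ∣ x + 4*c) ↔ ((4*(c:ℤ)) ∣ x) := by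
    intro x
    constructor
    · intro h; have := dvd_sub h (dvd_refl (4*(c:ℤ))); simpa using this
    · intro h; exact dvd_add h (dvd_refl _)
  have e1 : ((4*(c:ℤ)) ∣ (-m - i)) ↔ ((4*(c:ℤ)) ∣ (m + i)) := by
    rw [show (-m - (i:ℤ)) = -(m + i) by ring, dvd_neg]
  have e2 : ((4*(c:ℤ)) ∣ (-m + i)) ↔ ((4*(c:ℤ)) ∣ (m - i)) := by
    rw [show (-m + (i:ℤ)) = -(m - i) by ring, dvd_neg]
  have e3 : ((4*(c:ℤ)) ∣ (-m - i - 2*c)) ↔ ((4*(c:ℤ)) ∣ (m + i - 2*c)) := by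
    rw [show (-m - (i:ℤ) - 2*c) = -((m + i - 2*c) + 4*c) by ring, dvd_neg, hsh]
  have e4 : ((4*(c:ℤ)) ∣ (-m + i - 2*c)) ↔ ((4*(c:ℤ)) ∣ (m - i - 2*c)) := by
    rw [show (-m + (i:ℤ) - 2*c) = -((m - i - 2*c) + 4*c) by ring, dvd_neg, hsh]
  simp only [wfn, e1, e2, e3, e4]
  ring

lemma wfn_fe (c i : ℕ) (t : ℤ) : wfn c i ((c:ℤ) + t) + wfn c i ((c:ℤ) - t) = 0 := by
  have e1 : ((4*(c:ℤ)) ∣ ((c:ℤ) - t - i)) ↔ ((4*(c:ℤ)) ∣ ((c:ℤ) + t + i - 2*c)) := by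
    rw [show ((c:ℤ) - t - i) = -(((c:ℤ) + t + i - 2*c)) by ring, dvd_neg]
  have e2 : ((4*(c:ℤ)) ∣ ((c:ℤ) - t + i)) ↔ ((4*(c:ℤ)) ∣ ((c:ℤ) + t - i - 2*c)) := by
    rw [show ((c:ℤ) - t + i) = -(((c:ℤ) + t - i - 2*c)) by ring, dvd_neg]
  have e3 : ((4*(c:ℤ)) ∣ ((c:ℤ) - t - i - 2*c)) ↔ ((4*(c:ℤ)) ∣ ((c:ℤ) + t + i)) := by
    rw [show ((c:ℤ) - t - i - 2*c) = -(((c:ℤ) + t + i)) by ring, dvd_neg]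
  have e4 : ((4*(c:ℤ)) ∣ ((c:ℤ) - t + i - 2*c)) ↔ ((4*(c:ℤ)) ∣ ((c:ℤ) + t - i)) := by
    rw [show ((c:ℤ) - t + i - 2*c) = -(((c:ℤ) + t - i)) by ring, dvd_neg]
  simp only [wfn, e1, e2, e3, e4]
  ring

lemma wfn_c (c i : ℕ) : wfn c i (c : ℤ) = 0 := by
  have := wfn_fe c i 0
  simp only [add_zero, sub_zero] at this
  omega

lemma wfn_val (c i j : ℕ) (hi : i < c) (hj : j < c) :
    wfn c i (j : ℤ) = if i = j then (if i = 0 then 2 else 1) else 0 := by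
  have c1 : ((4*(c:ℤ)) ∣ ((j:ℤ) - i)) ↔ i = j := by
    constructor
    · intro h; have := hz c _ h (by omega) (by omega); omega
    · rintro rfl; simp
  have c2 : ((4*(c:ℤ)) ∣ ((j:ℤ) + i)) ↔ (i = 0 ∧ j = 0) := by
    constructor
    · intro h; have := hz c _ h (by omega) (by omega); omega
    · rintro ⟨rfl, rfl⟩; simp
  have c3 : ¬ ((4*(c:ℤ)) ∣ ((j:ℤ) - i - 2*c)) := by
    intro h; have := hz c _ h (by omega) (by omega); omega
  have c4 : ¬ ((4*(c:ℤ)) ∣ ((j:ℤ) + i - 2*c)) := by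
    intro h; have := hz c _ h (by omega) (by omega); omega
  simp only [wfn, c1, c2, c3, c4, if_false]
  by_cases h : i = j <;> by_cases h0 : i = 0 <;> subst_vars <;> simp_all <;> omega

def mu (c i : ℕ) : RO2 →ₗ[ℤ] ℤ :=
  (lam (wfn c i)).comp ((LinearMap.fst ℤ LP ℤ).comp ev.toAddMonoidHom.toIntLinearMap)

def nu : RO2 →ₗ[ℤ] ℤ :=
  (LinearMap.snd ℤ LP ℤ).comp ev.toAddMonoidHom.toIntLinearMap

lemma mu_kap (c i n : ℕ) : mu c i (kap n) = wfn c i n + wfn c i n := by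
  rw [mu]
  simp only [LinearMap.comp_apply, LinearMap.fst_apply, AddMonoidHom.coe_toIntLinearMap,
    RingHom.toAddMonoidHom_eq_coe, AddMonoidHom.coe_coe]
  rw [ev_kap]
  show lam (wfn c i) (T (n:ℤ) + T (-(n:ℤ))) = _
  rw [map_add, lam_T, lam_T, wfn_even]

lemma mu_kapZ (c i : ℕ) (m : ℤ) : mu c i (kapZ m) = wfn c i m + wfn c i m := by
  rw [mu]
  simp only [LinearMap.comp_apply, LinearMap.fst_apply, AddMonoidHom.coe_toIntLinearMap,
    RingHom.toAddMonoidHom_eq_coe, AddMonoidHom.coe_coe]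
  rw [ev_kapZ]
  show lam (wfn c i) (T m + T (-m)) = _
  rw [map_add, lam_T, lam_T, wfn_even]

lemma mu_d (c i : ℕ) : mu c i dO = wfn c i 0 := by
  rw [mu]
  simp only [LinearMap.comp_apply, LinearMap.fst_apply, AddMonoidHom.coe_toIntLinearMap,
    RingHom.toAddMonoidHom_eq_coe, AddMonoidHom.coe_coe]
  rw [ev_d]
  show lam (wfn c i) 1 = _
  rw [← T_zero, lam_T]

lemma nu_kap (n : ℕ) : nu (kap n) = 0 := by
  rw [nu]
  simp only [LinearMap.comp_apply, LinearMap.snd_apply, AddMonoidHom.coe_toIntLinearMap,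
    RingHom.toAddMonoidHom_eq_coe, AddMonoidHom.coe_coe]
  rw [ev_kap]

lemma nu_kapZ (m : ℤ) : nu (kapZ m) = 0 := by rw [kapZ, nu_kap]

lemma nu_d : nu dO = -1 := by
  rw [nu]
  simp only [LinearMap.comp_apply, LinearMap.snd_apply, AddMonoidHom.coe_toIntLinearMap,
    RingHom.toAddMonoidHom_eq_coe, AddMonoidHom.coe_coe]
  rw [ev_d]

lemma mu_WO2 (c i : ℕ) {x : RO2} (hx : x ∈ WO2 c) : mu c i x = 0 := by
  refine Submodule.span_induction ?_ (by simp) ?_ ?_ hx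
  · intro y hy
    rcases WO2_gen_cases c hy with rfl | ⟨j, hj, rfl⟩
    · rw [mu_kap, wfn_c]; ring
    · rw [G, map_add, mu_kap, mu_kapZ]
      have h1 : ((c + j : ℕ) : ℤ) = (c:ℤ) + j := by push_cast; ring
      rw [h1]
      have := wfn_fe c i (j : ℤ)
      omega
  · intro a b _ _ ha hb; rw [map_add, ha, hb]; ring
  · intro a y _ hy; rw [map_smul, hy]; simp

lemma nu_WO2 (c : ℕ) {x : RO2} (hx : x ∈ WO2 c) : nu x = 0 := by
  refine Submodule.span_induction ?_ (by simp) ?_ ?_ hx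
  · intro y hy
    rcases WO2_gen_cases c hy with rfl | ⟨j, hj, rfl⟩
    · rw [nu_kap]
    · rw [G, map_add, nu_kap, nu_kapZ]; ring
  · intro a b _ _ ha hb; rw [map_add, ha, hb]; ring
  · intro a y _ hy; rw [map_smul, hy]; simp

end Functionals

section BasisSec
variable (c : ℕ)

def vB : Fin (c+1) → (RO2 ⧸ WO2 c) :=
  Fin.cases (Submodule.Quotient.mk dO) (fun j : Fin c => Submodule.Quotient.mk (kap j))

lemma vB_zero : vB c 0 = Submodule.Quotient.mk dO := rfl

lemma vB_succ (j : Fin c) : vB c j.succ = Submodule.Quotient.mk (kap j) := by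
  simp [vB]

lemma v_span (hc : 1 ≤ c) : Submodule.span ℤ (Set.range (vB c)) = ⊤ := by
  rw [eq_top_iff]
  rintro y -
  obtain ⟨x, rfl⟩ := Submodule.Quotient.mk_surjective _ y
  have hx : x ∈ Tsub c := by rw [Tsub_top c hc]; trivial
  rcases Submodule.mem_sup.mp hx with ⟨a, ha, b, hb, rfl⟩
  have hmkb : (Submodule.Quotient.mk b : RO2 ⧸ WO2 c) = 0 :=
    (Submodule.Quotient.mk_eq_zero _).mpr hb
  have : (Submodule.Quotient.mk (a + b) : RO2 ⧸ WO2 c) = Submodule.Quotient.mk a := by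
    rw [Submodule.Quotient.mk_add, hmkb, add_zero]
  rw [this]
  clear hx hmkb this hb
  refine Submodule.span_induction ?_ (by simp) ?_ ?_ ha
  · rintro z (rfl | ⟨m, hm, rfl⟩)
    · exact Submodule.subset_span ⟨0, rfl⟩
    · refine Submodule.subset_span ⟨(⟨m, hm⟩ : Fin c).succ, ?_⟩
      rw [vB_succ]
  · intro u v _ _ hu hv
    rw [Submodule.Quotient.mk_add]; exact Submodule.add_mem _ hu hv
  · intro t u _ hu
    rw [Submodule.Quotient.mk_smul]; exact Submodule.smul_mem _ t hu

lemma v_li : LinearIndependent ℤ (vB c) := by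
  rw [Fintype.linearIndependent_iff]
  intro g hg
  have hL : (g 0 • dO + ∑ j : Fin c, g j.succ • kap (j : ℕ)) ∈ WO2 c := by
    rw [← Submodule.Quotient.mk_eq_zero (WO2 c)]
    have e : ∀ i : Fin c, g i.succ • vB c i.succ
        = Submodule.Quotient.mk (g i.succ • kap (i : ℕ)) := fun i => by
      rw [vB_succ, Submodule.Quotient.mk_smul]
    have e2 : ∑ i : Fin c, g i.succ • vB c i.succ
        = (Submodule.Quotient.mk (∑ j : Fin c, g j.succ • kap (j : ℕ)) : RO2 ⧸ WO2 c) := by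
      rw [Finset.sum_congr rfl (fun i _ => e i)]
      exact (map_sum ((WO2 c).mkQ) _ _).symm
    rw [← hg, Fin.sum_univ_succ, vB_zero, Submodule.Quotient.mk_add,
      Submodule.Quotient.mk_smul, e2]
  have hg0 : g 0 = 0 := by
    have hnu := nu_WO2 c hL
    rw [map_add, map_smul, nu_d, map_sum] at hnu
    simp only [map_smul, nu_kap, smul_zero, Finset.sum_const_zero, add_zero,
      smul_eq_mul, mul_zero] at hnu
    omega
  have hgs : ∀ i : Fin c, g i.succ = 0 := by
    intro i
    have hmu := mu_WO2 c (i : ℕ) hL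
    rw [map_add, map_smul, map_sum, hg0, zero_smul, zero_add] at hmu
    simp only [map_smul] at hmu
    have hterm : ∀ j : Fin c, g j.succ • mu c (i : ℕ) (kap (j : ℕ))
        = (if (i : ℕ) = (j : ℕ) then g j.succ * (2 * (if (i : ℕ) = 0 then 2 else 1)) else 0) := by
      intro j
      rw [mu_kap, wfn_val c i j i.isLt j.isLt]
      by_cases h : (i : ℕ) = (j : ℕ)
      · rw [if_pos h, if_pos h]
        by_cases h0 : (i : ℕ) = 0 <;> simp [h0] <;> ring
      · rw [if_neg h, if_neg h]
        simp
    rw [Finset.sum_congr rfl (fun j _ => hterm j)] at hmu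
    rw [Finset.sum_eq_single i (fun j _ hji => if_neg (fun hc => hji (Fin.ext hc.symm)))
      (fun h => absurd (Finset.mem_univ i) h)] at hmu
    rw [if_pos rfl] at hmu
    by_cases hi0 : (i : ℕ) = 0 <;> simp [hi0] at hmu <;> omega
  intro i
  induction i using Fin.cases with
  | zero => exact hg0
  | succ j => exact hgs j

end BasisSec

section Sigma

lemma sigmaP_two_step (n : ℕ) :
    sigmaP (n + 2) = Polynomial.X * sigmaP (n + 1) - sigmaP n := rfl

def eps (m : ℕ) : RO2 := if Even m then 1 else dO

lemma K_eps (m : ℕ) : kap 1 * eps m = kap 1 := by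
  rw [eps]; split_ifs
  · rw [mul_one]
  · rw [mul_comm, rel1]

lemma kap0_sub_eps (m : ℕ) : kap 0 - eps m = eps (m + 1) := by
  rcases Nat.even_or_odd m with h | h
  · rw [eps, eps, if_pos h, if_neg (by simp [Nat.even_add_one, h])]
    rw [kap_zero]; ring
  · rw [eps, eps, if_neg (by simp [Nat.not_even_iff_odd.mpr h]),
      if_pos (by simp [Nat.even_add_one, Nat.not_even_iff_odd.mpr h])]
    rw [kap_zero]; ring

lemma sig_formula : ∀ m : ℕ,
    (Polynomial.aeval (kap 1)) (sigmaP (2*m)) = (∑ t ∈ Finset.range m, kap (2*t+1)) ∧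
    (Polynomial.aeval (kap 1)) (sigmaP (2*m+1))
      = (∑ t ∈ Finset.range m, kap (2*t+2)) + eps m := by
  intro m
  induction m with
  | zero =>
    constructor
    · show (Polynomial.aeval (kap 1)) (sigmaP 0) = _
      simp [sigmaP]
    · show (Polynomial.aeval (kap 1)) (sigmaP 1) = _
      simp [sigmaP, eps]
  | succ m ih =>
    obtain ⟨ih1, ih2⟩ := ih
    have heven : (Polynomial.aeval (kap 1)) (sigmaP (2*(m+1)))
        = ∑ t ∈ Finset.range (m+1), kap (2*t+1) := by
      rw [show 2*(m+1) = (2*m) + 2 by ring, sigmaP_two_step, map_sub, map_mul,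
        Polynomial.aeval_X, ih1, show 2*m+1 = 2*m+1 from rfl, ih2]
      have h1 : kap 1 * ∑ t ∈ Finset.range m, kap (2*t+2)
          = (∑ t ∈ Finset.range m, kap (2*t+3)) + ∑ t ∈ Finset.range m, kap (2*t+1) := by
        rw [Finset.mul_sum, ← Finset.sum_add_distrib]
        refine Finset.sum_congr rfl fun t _ => ?_
        rw [show 2*t+2 = (2*t+1) + 1 from rfl, K_kap_succ]
      have h2 : ∑ t ∈ Finset.range (m+1), kap (2*t+1)
          = (∑ t ∈ Finset.range m, kap (2*t+3)) + kap 1 := by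
        rw [Finset.sum_range_succ']
        congr 1
      rw [mul_add, h1, K_eps, h2]
      ring
    constructor
    · exact heven
    · rw [show 2*(m+1)+1 = (2*(m+1) - 1) + 2 by omega, sigmaP_two_step, map_sub, map_mul,
        Polynomial.aeval_X, show 2*(m+1) - 1 + 1 = 2*(m+1) from by omega, heven,
        show 2*(m+1) - 1 = 2*m+1 from by omega, ih2]
      have h3 : kap 1 * ∑ t ∈ Finset.range (m+1), kap (2*t+1)
          = (∑ t ∈ Finset.range (m+1), kap (2*t+2)) + ∑ t ∈ Finset.range (m+1), kap (2*t) := by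
        rw [Finset.mul_sum, ← Finset.sum_add_distrib]
        refine Finset.sum_congr rfl fun t _ => ?_
        rw [show 2*t+1 = (2*t) + 1 from rfl, K_kap_succ]
      have h4 : ∑ t ∈ Finset.range (m+1), kap (2*t)
          = kap 0 + ∑ t ∈ Finset.range m, kap (2*t+2) := by
        rw [Finset.sum_range_succ']
        rw [add_comm]
        congr 1
      rw [h3, h4, ← kap0_sub_eps m]
      ring

end Sigma

section Pair
variable (c : ℕ)

lemma pair_mem' {a b : ℕ} (hab : a + b = 2*c) (hle : a ≤ b) :
    kap a + kap b ∈ WO2 c := by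
  rcases Nat.eq_or_lt_of_le (show c ≤ b by omega) with h | h
  · have ha : a = c := by omega
    subst ha; rw [← h]
    exact Submodule.add_mem _ (kapc_mem _) (kapc_mem _)
  · have hG : G c (b - c) = kap b + kap a := by
      rw [G, show c + (b - c) = b by omega,
        show ((c:ℤ) - ((b - c : ℕ) : ℤ)) = ((a : ℕ) : ℤ) by omega, kapZ_natCast]
    rw [add_comm, ← hG]
    exact G_mem c _

lemma pair_mem {a b : ℕ} (hab : a + b = 2*c) : kap a + kap b ∈ WO2 c := by
  rcases le_total a b with h | h
  · exact pair_mem' c hab h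
  · rw [add_comm]; exact pair_mem' c (by omega) h

lemma two_smul_sig_mem (hc : 1 ≤ c) :
    (∑ t ∈ Finset.range c, kap (2*t+1)) + (∑ t ∈ Finset.range c, kap (2*t+1)) ∈ WO2 c := by
  have h2 : (∑ t ∈ Finset.range c, kap (2*t+1)) + (∑ t ∈ Finset.range c, kap (2*t+1))
      = ∑ t ∈ Finset.range c, (kap (2*t+1) + kap (2*(c-1-t)+1)) := by
    rw [Finset.sum_add_distrib]
    congr 1
    exact (Finset.sum_range_reflect (fun t => kap (2*t+1)) c).symm
  rw [h2]
  refine Submodule.sum_mem _ fun t ht => ?_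
  have htc : t < c := Finset.mem_range.mp ht
  exact pair_mem c (by omega)

end Pair

theorem stmt_15 (k c : ℕ) (hkc : k + 2 = 2 * c) (hc1 : 1 ≤ c) :
    -- `[δ], [κ_0], [κ_1], …, [κ_{k/2}]` is a `ℤ`-basis of the quotient
    (∃ B : Module.Basis (Fin (c + 1)) ℤ (RO2 ⧸ WO2 c),
      B 0 = Submodule.Quotient.mk dO ∧
      ∀ i : ℕ, ∀ h : i + 1 < c + 1,
        B ⟨i + 1, h⟩ = Submodule.Quotient.mk (kap i)) ∧
    -- multiplication by `κ_1` descends to the quotient ...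
    (∃ φ : (RO2 ⧸ WO2 c) →ₗ[ℤ] (RO2 ⧸ WO2 c),
      (∀ x : RO2, φ (Submodule.Quotient.mk x)
          = Submodule.Quotient.mk (kap 1 * x)) ∧
      -- ... and realizes the Dynkin diagram `D_{k/2+2}` on this basis:
      φ (Submodule.Quotient.mk dO) = Submodule.Quotient.mk (kap 1) ∧
      φ (Submodule.Quotient.mk (kap 0))
        = Submodule.Quotient.mk (kap 1) + Submodule.Quotient.mk (kap 1) ∧
      (∀ i : ℕ, 1 ≤ i →
        φ (Submodule.Quotient.mk (kap i))
          = Submodule.Quotient.mk (kap (i + 1)) + Submodule.Quotient.mk (kap (i - 1))) ∧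
      Submodule.Quotient.mk (kap c) = (0 : RO2 ⧸ WO2 c)) ∧
    -- the `R_{SU(2)}`-module structure factors through the fusion ideal
    -- `(σ_{k+2})` (where `σ` restricts to `κ_1`), so it is a module over
    -- `Ver_k(SU(2))`
    (∀ x : RO2,
      Submodule.Quotient.mk ((Polynomial.aeval (kap 1) (sigmaP (k + 2))) * x)
        = (0 : RO2 ⧸ WO2 c)) := by
  set B : Module.Basis (Fin (c + 1)) ℤ (RO2 ⧸ WO2 c) :=
    Module.Basis.mk (v_li c) (v_span c hc1).ge with hB
  have hle : WO2 c ≤ Submodule.comap (LinearMap.mulLeft ℤ (kap 1)) (WO2 c) := by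
    intro x hx
    rw [Submodule.mem_comap, LinearMap.mulLeft_apply]
    exact WO2_K_closed c hx
  set φ : (RO2 ⧸ WO2 c) →ₗ[ℤ] (RO2 ⧸ WO2 c) :=
    Submodule.mapQ (WO2 c) (WO2 c) (LinearMap.mulLeft ℤ (kap 1)) hle with hφdef
  have hφ : ∀ x : RO2, φ (Submodule.Quotient.mk x) = Submodule.Quotient.mk (kap 1 * x) := by
    intro x
    rw [hφdef, Submodule.mapQ_apply, LinearMap.mulLeft_apply]
  refine ⟨⟨B, ?_, ?_⟩, ⟨φ, hφ, ?_, ?_, ?_, ?_⟩, ?_⟩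
  · rw [hB, Module.Basis.mk_apply]; exact vB_zero c
  · intro i h
    rw [hB, Module.Basis.mk_apply]
    rw [show (⟨i + 1, h⟩ : Fin (c + 1)) = (⟨i, by omega⟩ : Fin c).succ from rfl]
    rw [vB_succ]
  · rw [hφ, show kap 1 * dO = kap 1 by rw [mul_comm (kap 1) dO, rel1]]
  · rw [hφ, K_kap_zero, Submodule.Quotient.mk_add]
  · intro i hi
    obtain ⟨n, rfl⟩ := Nat.exists_eq_add_of_le hi
    rw [hφ, show 1 + n = n + 1 from Nat.add_comm 1 n, K_kap_succ,
      Submodule.Quotient.mk_add, show n + 1 + 1 = n + 2 from rfl,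
      show n + 1 - 1 = n from rfl]
  · exact (Submodule.Quotient.mk_eq_zero _).mpr (kapc_mem c)
  · intro x
    have hs : (Polynomial.aeval (kap 1)) (sigmaP (k + 2))
        = ∑ t ∈ Finset.range c, kap (2*t+1) := by
      rw [hkc, show 2 * c = 2 * c from rfl]
      exact (sig_formula c).1
    set y : RO2 ⧸ WO2 c :=
      Submodule.Quotient.mk ((Polynomial.aeval (kap 1)) (sigmaP (k + 2)) * x) with hy
    have h2 : (Polynomial.aeval (kap 1)) (sigmaP (k + 2)) * x
        + (Polynomial.aeval (kap 1)) (sigmaP (k + 2)) * x ∈ WO2 c := by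
      rw [← add_mul, hs,
        mul_comm ((∑ t ∈ Finset.range c, kap (2*t+1)) + ∑ t ∈ Finset.range c, kap (2*t+1)) x]
      exact WO2_mul_closed c x (two_smul_sig_mem c hc1)
    have h3 : y + y = 0 := by
      rw [hy, ← Submodule.Quotient.mk_add, Submodule.Quotient.mk_eq_zero]

      exact h2
    have h4 : B.repr y + B.repr y = 0 := by
      rw [← LinearEquiv.map_add, h3, LinearEquiv.map_zero]
    have h5 : B.repr y = 0 := by
      ext i
      have := congrArg (fun f => f i) h4
      simp only [Finsupp.add_apply, Finsupp.coe_zero, Pi.zero_apply] at this ⊢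
      omega
    exact (LinearEquiv.map_eq_zero_iff B.repr).mp h5


end
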